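/- For a real number v > 0, there exists a real number a > 0 satisfying the dispersion relation a·exp(−a·v) = 1 if and only if v ≤ 1/e. -/

import Mathlib

theorem dispersion_relation_solvable_iff (v : ℝ) (hv : 0 < v) :
    (∃ a : ℝ, 0 < a ∧ a * Real.exp (-a * v) = 1) ↔ v ≤ 1 / Real.exp 1 := by
  have he : (0:ℝ) < Real.exp 1 := Real.exp_pos 1
  constructor
  · rintro ⟨a, ha, heq⟩
    rw [neg_mul, Real.exp_neg] at heq
    have hexp : a = Real.exp (a * v) := by
      field_simp at heq
      linarith
    have key : a * v ≤ a / Real.exp 1 := by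
      have h1 : (a * v - 1) + 1 ≤ Real.exp (a * v - 1) := Real.add_one_le_exp _
      have h2 : Real.exp (a * v - 1) = Real.exp (a * v) / Real.exp 1 := by
        rw [Real.exp_sub]
      rw [h2, ← hexp] at h1
      linarith
    rw [div_eq_mul_inv, ← one_div] at key
    exact le_of_mul_le_mul_left key ha
  · intro hvle
    set f : ℝ → ℝ := fun a => a * Real.exp (-a * v) with hf
    have hcont : ContinuousOn f (Set.Icc 0 (1/v)) :=
      (continuous_id.mul ((continuous_id.neg.mul continuous_const).rexp)).continuousOn
    have h0 : f 0 = 0 := by simp [hf]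
    have hM : 1 ≤ f (1/v) := by
      have hfv : f (1/v) = (1/v) * (Real.exp 1)⁻¹ := by
        simp only [hf, neg_mul, Real.exp_neg]
        congr 2
        rw [one_div, inv_mul_cancel₀ (ne_of_gt hv)]
      rw [hfv]
      have h1 : v * Real.exp 1 ≤ 1 := (le_div_iff₀ he).mp hvle
      have h2 : (0:ℝ) < v * Real.exp 1 := by positivity
      calc (1:ℝ) ≤ (v * Real.exp 1)⁻¹ := (one_le_inv₀ h2).mpr h1
        _ = (1/v) * (Real.exp 1)⁻¹ := by rw [mul_inv, one_div]
    have hiv := intermediate_value_Icc (by positivity : (0:ℝ) ≤ 1/v) hcont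
    have h1mem : (1:ℝ) ∈ Set.Icc (f 0) (f (1/v)) := by
      rw [h0]; exact ⟨zero_le_one, hM⟩
    obtain ⟨a, haI, hfa⟩ := hiv h1mem
    refine ⟨a, ?_, hfa⟩
    rcases lt_or_eq_of_le haI.1 with h | h
    · exact h
    · exfalso; rw [← h] at hfa; simp [hf] at hfa
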